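/- In the synchronous FL round, if some client m satisfies T_m < T = max_k T_k and the PS lowers α_m so that client m's best-response time increases to exactly T, then the PS's payment term α_m(T₀ − T_m) strictly decreases while T is unchanged; hence at the PS's optimum, T_m = T for all selected clients (absent frequency caps). -/

import Mathlib

private lemma Rdec (C Tc T₀ x y : ℝ) (hC : 0 < C) (hx : Tc < x) (hxy : x < y)
    (hy : y < T₀) :
    C * (T₀ - y) / (y - Tc) ^ 3 < C * (T₀ - x) / (x - Tc) ^ 3 := by
  apply div_lt_div₀
  · nlinarith
  · nlinarith [pow_le_pow_left₀ (by linarith : (0:ℝ) ≤ x - Tc) (by linarith : x - Tc ≤ y - Tc) 3]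
  · nlinarith
  · exact pow_pos (by linarith) 3

/-- In a synchronous round with `T = max_k T_k` and payments
`R_k(T_k) = 2β_k v_k a_k³(T₀ − T_k)/(T_k − T_com_k)³`: raising any `T_m < T` up to `T`
strictly decreases `R_m` and leaves the maximum unchanged; consequently any feasible
configuration minimizing `Σ_k R_k(T_k) + μ·max_k T_k` has `T_k = max_j T_j` for all `k`. -/
theorem stmt_13 (n : ℕ) [NeZero n] (β v a Tcom : Fin n → ℝ) (T₀ μ : ℝ)
    (hβ : ∀ k, 0 < β k) (hv : ∀ k, 0 < v k) (ha : ∀ k, 0 < a k)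
    (hTcom : ∀ k, 0 < Tcom k) (hT₀ : ∀ k, Tcom k < T₀) (hμ : 0 < μ) :
    let R : Fin n → ℝ → ℝ := fun k x => 2 * β k * v k * (a k) ^ 3 * (T₀ - x) / (x - Tcom k) ^ 3
    let sup : (Fin n → ℝ) → ℝ := fun Tv => Finset.univ.sup' Finset.univ_nonempty Tv
    let obj : (Fin n → ℝ) → ℝ := fun Tv => (∑ k, R k (Tv k)) + μ * sup Tv
    (∀ Tv : Fin n → ℝ, (∀ k, Tv k ∈ Set.Ioo (Tcom k) T₀) →
      ∀ m, Tv m < sup Tv →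
        R m (sup Tv) < R m (Tv m) ∧
          sup (Function.update Tv m (sup Tv)) = sup Tv) ∧
    (∀ Tv : Fin n → ℝ, (∀ k, Tv k ∈ Set.Ioo (Tcom k) T₀) →
      (∀ Tv' : Fin n → ℝ, (∀ k, Tv' k ∈ Set.Ioo (Tcom k) T₀) → obj Tv ≤ obj Tv') →
      ∀ k, Tv k = sup Tv) := by
  intro R sup obj
  have hsup_lt : ∀ Tv : Fin n → ℝ, (∀ k, Tv k ∈ Set.Ioo (Tcom k) T₀) → sup Tv < T₀ := by
    intro Tv hTv
    obtain ⟨j, _, hj⟩ := Finset.exists_mem_eq_sup' Finset.univ_nonempty Tv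
    rw [show sup Tv = Tv j from hj]
    exact (hTv j).2
  have key : ∀ Tv : Fin n → ℝ, (∀ k, Tv k ∈ Set.Ioo (Tcom k) T₀) →
      ∀ m, Tv m < sup Tv →
        R m (sup Tv) < R m (Tv m) ∧
          sup (Function.update Tv m (sup Tv)) = sup Tv := by
    intro Tv hTv m hm
    have hC : 0 < 2 * β m * v m * (a m) ^ 3 := by
      have := hβ m; have := hv m; have := ha m; positivity
    constructor
    · exact Rdec _ _ _ _ _ hC (hTv m).1 hm (hsup_lt Tv hTv)
    · apply le_antisymm
      · apply Finset.sup'_le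
        intro k _
        rcases eq_or_ne k m with rfl | hk
        · rw [Function.update_self]
        · rw [Function.update_of_ne hk]
          exact Finset.le_sup' Tv (Finset.mem_univ k)
      · have := Finset.le_sup' (Function.update Tv m (sup Tv)) (Finset.mem_univ m)
        rwa [Function.update_self] at this
  refine ⟨key, ?_⟩
  intro Tv hTv hmin k
  by_contra hne
  have hk : Tv k < sup Tv :=
    lt_of_le_of_ne (Finset.le_sup' Tv (Finset.mem_univ k)) hne
  obtain ⟨hRlt, hsup_eq⟩ := key Tv hTv k hk
  set Tv' := Function.update Tv k (sup Tv) with hTv'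
  have hfeas : ∀ j, Tv' j ∈ Set.Ioo (Tcom j) T₀ := by
    intro j
    rcases eq_or_ne j k with rfl | hj
    · rw [hTv', Function.update_self]
      exact ⟨lt_trans (hTv j).1 hk, hsup_lt Tv hTv⟩
    · rw [hTv', Function.update_of_ne hj]; exact hTv j
  have hsum : (∑ j, R j (Tv' j)) < ∑ j, R j (Tv j) := by
    apply Finset.sum_lt_sum
    · intro i _
      rcases eq_or_ne i k with rfl | hi
      · rw [hTv', Function.update_self]; exact le_of_lt hRlt
      · rw [hTv', Function.update_of_ne hi]
    · exact ⟨k, Finset.mem_univ k, by rw [hTv', Function.update_self]; exact hRlt⟩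
  have : obj Tv' < obj Tv := by
    simp only [obj]
    rw [show sup Tv' = sup Tv from hsup_eq]
    linarith
  exact absurd (hmin Tv' hfeas) (not_le.mpr this)
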